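/- Let P be a partition of a subset of Sc and suppose w, w' ∈ Sₙ are equivalent under the P-equivalence. If i, j are positions with |i − j| ≥ c and wᵢ < wⱼ, then w'ᵢ < w'ⱼ. -/

import Mathlib

/-- `P` (a family of parts, each a set of patterns from `S_c` written as lists) is a
partition of a subset of `S_c`: parts are nonempty, pairwise disjoint, and consist
of permutations of `{1, …, c}`. -/
def IsReplacementPartition (c : ℕ) (P : Set (Set (List ℕ))) : Prop :=
  (∀ B ∈ P, B.Nonempty) ∧
  (∀ B ∈ P, ∀ p ∈ B, p.Perm (List.range' 1 c)) ∧
  (∀ B ∈ P, ∀ B' ∈ P, B ≠ B' → B ∩ B' = ∅)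

/-- A single `P`-rearrangement: a contiguous subword of length `c` forming (a shift
by `m` of) a pattern `p` in some part `B` of `P` is rearranged to form (the same
shift of) a pattern `q` in the same part `B`; all other letters are unchanged. -/
def PRearr (c : ℕ) (P : Set (Set (List ℕ))) (w w' : List ℕ) : Prop :=
  ∃ (i m : ℕ) (B : Set (List ℕ)) (p q : List ℕ),
    B ∈ P ∧ p ∈ B ∧ q ∈ B ∧ i + c ≤ w.length ∧
    w = w.take i ++ p.map (· + m) ++ w.drop (i + c) ∧
    w' = w.take i ++ q.map (· + m) ++ w.drop (i + c)

/-- A single rearrangement produces a permutation of the original word. -/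
lemma PRearr.perm {c : ℕ} {P : Set (Set (List ℕ))} (hP : IsReplacementPartition c P)
    {w w' : List ℕ} (h : PRearr c P w w') : w'.Perm w := by
  obtain ⟨i0, m, B, p, q, hB, hp, hq, hlen, hwE, hw'E⟩ := h
  have hpP : p.Perm (List.range' 1 c) := hP.2.1 B hB p hp
  have hqP : q.Perm (List.range' 1 c) := hP.2.1 B hB q hq
  have hPQ : (q.map (· + m)).Perm (p.map (· + m)) :=
    ((hqP.map _).trans (hpP.map _).symm)
  rw [hw'E]
  nth_rewrite 3 [hwE]
  exact (hPQ.append_left _).append_right _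

/-- Key single-step lemma: a single rearrangement preserves the relative order of
letters at positions at distance ≥ c. -/
lemma PRearr.order {n c : ℕ} (hc : 1 ≤ c) {P : Set (Set (List ℕ))}
    (hP : IsReplacementPartition c P) {w w' : List ℕ}
    (hw : w.Perm (List.range' 1 n)) (h : PRearr c P w w')
    {i j : ℕ} (hi : i < n) (hj : j < n) (hfar : i + c ≤ j ∨ j + c ≤ i) :
    (w.getD i 0 < w.getD j 0 ↔ w'.getD i 0 < w'.getD j 0) := by
  obtain ⟨i0, m, B, p, q, hB, hp, hq, hlen0, hwE, hw'E⟩ := h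
  have hwlen : w.length = n := by simpa using hw.length_eq
  have hlen : i0 + c ≤ n := hwlen ▸ hlen0
  have hpP : p.Perm (List.range' 1 c) := hP.2.1 B hB p hp
  have hqP : q.Perm (List.range' 1 c) := hP.2.1 B hB q hq
  set A := w.take i0 with hA
  set C := w.drop (i0 + c) with hC
  set P' := p.map (· + m) with hP'
  set Q' := q.map (· + m) with hQ'
  have hmap : (List.range' 1 c).map (· + m) = List.range' (m + 1) c := by
    have := List.map_add_range' (a := m) 1 c 1
    simpa [Nat.add_comm] using this
  have hP'perm : P'.Perm (List.range' (m + 1) c) := hmap ▸ hpP.map _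
  have hQ'perm : Q'.Perm (List.range' (m + 1) c) := hmap ▸ hqP.map _
  have hAlen : A.length = i0 := by simp [hA, hwlen]; omega
  have hP'len : P'.length = c := by simpa using hP'perm.length_eq
  have hQ'len : Q'.length = c := by simpa using hQ'perm.length_eq
  have hClen : C.length = n - (i0 + c) := by simp [hC, hwlen]
  -- bounds for elements of P' and Q'
  have hP'mem : ∀ x ∈ P', m + 1 ≤ x ∧ x ≤ m + c := by
    intro x hx
    have := (List.mem_range'_1).1 (hP'perm.subset hx)
    omega
  have hQ'mem : ∀ x ∈ Q', m + 1 ≤ x ∧ x ≤ m + c := by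
    intro x hx
    have := (List.mem_range'_1).1 (hQ'perm.subset hx)
    omega
  -- m + c ≤ n
  have hmcn : m + c ≤ n := by
    have hmem : m + c ∈ P' := hP'perm.mem_iff.2 (List.mem_range'_1.2 (by omega))
    have : m + c ∈ w := by rw [hwE]; simp [hmem]
    have := List.mem_range'_1.1 (hw.subset this)
    omega
  -- counts of middle values vanish outside the middle block
  have hcount : ∀ v, m + 1 ≤ v → v ≤ m + c → List.count v A = 0 ∧ List.count v C = 0 := by
    intro v h1 h2
    have hvw : List.count v w = 1 := by
      rw [hw.count_eq]
      exact List.count_eq_one_of_mem (List.nodup_range' (step := 1) (h := by omega)) (List.mem_range'_1.2 (by omega))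
    have hvP : List.count v P' = 1 :=
      hP'perm.count_eq v ▸ List.count_eq_one_of_mem (List.nodup_range' (step := 1) (h := by omega))
        (List.mem_range'_1.2 (by omega))
    have : List.count v A + List.count v P' + List.count v C = 1 := by
      rw [← hvw]; conv_rhs => rw [hwE]
      simp [List.count_append]
      omega
    omega
  -- values at positions outside the middle block are unchanged and out of range
  have houter : ∀ k, k < n → (k < i0 ∨ i0 + c ≤ k) →
      w'.getD k 0 = w.getD k 0 ∧ ¬ (m + 1 ≤ w.getD k 0 ∧ w.getD k 0 ≤ m + c) := by
    intro k hk hkcase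
    rcases hkcase with hlt | hge
    · have h1 : w.getD k 0 = A.getD k 0 := by
        nth_rewrite 1 [hwE]
        rw [List.append_assoc, List.getD_append _ _ _ _ (by omega)]
      have h2 : w'.getD k 0 = A.getD k 0 := by
        rw [hw'E, List.append_assoc, List.getD_append _ _ _ _ (by omega)]
      have hmemA : A.getD k 0 ∈ A := by
        rw [List.getD_eq_getElem _ _ (by omega)]
        exact List.getElem_mem _
      refine ⟨h2.trans h1.symm, ?_⟩
      rintro ⟨hb1, hb2⟩
      rw [h1] at hb1 hb2
      have h0 := (hcount _ hb1 hb2).1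
      have hpos : 0 < List.count (A.getD k 0) A := List.count_pos_iff.2 hmemA
      omega
    · have hsum : (A ++ P').length = i0 + c := by simp [hAlen, hP'len]
      have hsum' : (A ++ Q').length = i0 + c := by simp [hAlen, hQ'len]
      have h1 : w.getD k 0 = C.getD (k - (i0 + c)) 0 := by
        nth_rewrite 1 [hwE]
        rw [List.getD_append_right _ _ _ _ (by rw [hsum]; omega)]
        rw [hsum]
      have h2 : w'.getD k 0 = C.getD (k - (i0 + c)) 0 := by
        rw [hw'E, List.getD_append_right _ _ _ _ (by omega)]
        congr 1; omega
      have hmemC : C.getD (k - (i0 + c)) 0 ∈ C := by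
        rw [List.getD_eq_getElem _ _ (by omega)]
        exact List.getElem_mem _
      refine ⟨h2.trans h1.symm, ?_⟩
      rintro ⟨hb1, hb2⟩
      rw [h1] at hb1 hb2
      have h0 := (hcount _ hb1 hb2).2
      have hpos : 0 < List.count (C.getD (k - (i0 + c)) 0) C := List.count_pos_iff.2 hmemC
      omega
  -- values at positions in the middle block are in the range, for both w and w'
  have hinner : ∀ k, i0 ≤ k → k < i0 + c →
      (m + 1 ≤ w.getD k 0 ∧ w.getD k 0 ≤ m + c) ∧
      (m + 1 ≤ w'.getD k 0 ∧ w'.getD k 0 ≤ m + c) := by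
    intro k h1 h2
    have e1 : w.getD k 0 = P'.getD (k - i0) 0 := by
      nth_rewrite 1 [hwE]
      rw [List.getD_append _ _ _ _ (by simp [hAlen, hP'len]; omega),
        List.getD_append_right _ _ _ _ (by omega)]
      congr 1; omega
    have e2 : w'.getD k 0 = Q'.getD (k - i0) 0 := by
      rw [hw'E, List.getD_append _ _ _ _ (by simp [hAlen, hQ'len]; omega),
        List.getD_append_right _ _ _ _ (by omega)]
      congr 1; omega
    have m1 : P'.getD (k - i0) 0 ∈ P' := by
      rw [List.getD_eq_getElem _ _ (by omega)]
      exact List.getElem_mem _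
    have m2 : Q'.getD (k - i0) 0 ∈ Q' := by
      rw [List.getD_eq_getElem _ _ (by omega)]
      exact List.getElem_mem _
    exact ⟨e1 ▸ hP'mem _ m1, e2 ▸ hQ'mem _ m2⟩
  -- now split into cases
  by_cases hiI : i0 ≤ i ∧ i < i0 + c
  · -- i in middle; then j is outside
    have hjO : j < i0 ∨ i0 + c ≤ j := by omega
    obtain ⟨hje, hjr⟩ := houter j hj hjO
    obtain ⟨hw1, hw2⟩ := hinner i hiI.1 hiI.2
    rw [hje]
    omega
  · by_cases hjI : i0 ≤ j ∧ j < i0 + c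
    · have hiO : i < i0 ∨ i0 + c ≤ i := by omega
      obtain ⟨hie, hir⟩ := houter i hi hiO
      obtain ⟨hw1, hw2⟩ := hinner j hjI.1 hjI.2
      rw [hie]
      omega
    · obtain ⟨hie, _⟩ := houter i hi (by omega)
      obtain ⟨hje, _⟩ := houter j hj (by omega)
      rw [hie, hje]

theorem stmt7' (n c : ℕ) (hc : 1 ≤ c) (P : Set (Set (List ℕ)))
    (hP : IsReplacementPartition c P)
    (w w' : List ℕ) (hw : w.Perm (List.range' 1 n))
    (heq : Relation.EqvGen (PRearr c P) w w')
    (i j : ℕ) (hi : i < n) (hj : j < n)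
    (hfar : i + c ≤ j ∨ j + c ≤ i)
    (hlt : w.getD i 0 < w.getD j 0) :
    w'.getD i 0 < w'.getD j 0 := by
  have key : ∀ a b : List ℕ, Relation.EqvGen (PRearr c P) a b →
      (a.Perm (List.range' 1 n) ↔ b.Perm (List.range' 1 n)) ∧
      (a.Perm (List.range' 1 n) →
        (a.getD i 0 < a.getD j 0 ↔ b.getD i 0 < b.getD j 0)) := by
    intro a b h
    induction h with
    | rel a b hab =>
      refine ⟨⟨fun ha => (hab.perm hP).trans ha, fun hb => ((hab.perm hP).symm).trans hb⟩,
        fun ha => hab.order hc hP ha hi hj hfar⟩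
    | refl a => exact ⟨Iff.rfl, fun _ => Iff.rfl⟩
    | symm a b h ih =>
      exact ⟨ih.1.symm, fun hb => (ih.2 (ih.1.mpr hb)).symm⟩
    | trans a b c h1 h2 ih1 ih2 =>
      exact ⟨ih1.1.trans ih2.1, fun ha => (ih1.2 ha).trans (ih2.2 (ih1.1.mp ha))⟩
  exact ((key w w' heq).2 hw).mp hlt

/-- If `w ≡ w'` under the `P`-equivalence and `|i − j| ≥ c` with `wᵢ < wⱼ`,
then `w'ᵢ < w'ⱼ`. -/
theorem stmt7 (n c : ℕ) (hc : 1 ≤ c) (P : Set (Set (List ℕ)))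
    (hP : IsReplacementPartition c P)
    (w w' : List ℕ) (hw : w.Perm (List.range' 1 n))
    (heq : Relation.EqvGen (PRearr c P) w w')
    (i j : ℕ) (hi : i < n) (hj : j < n)
    (hfar : i + c ≤ j ∨ j + c ≤ i)
    (hlt : w.getD i 0 < w.getD j 0) :
    w'.getD i 0 < w'.getD j 0 := by
  exact stmt7' n c hc P hP w w' hw heq i j hi hj hfar hlt
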